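/- arXiv:2502.15415 — 2 statements merged into one kernel-verified Lean document; each statement's English description precedes it below -/
import Mathlib

section
/- Let k ≥ 1, let P, Q, R, S be Hermitian positive definite k×k complex matrices, and let φ, ψ, η, ξ > 0 be real numbers. Then the generalized beta matrix function satisfies the recurrence B_{(φ,ψ)}^{(R,S,η,ξ)}(P+I,Q) + B_{(φ,ψ)}^{(R,S,η,ξ)}(P,Q+I) = B_{(φ,ψ)}^{(R,S,η,ξ)}(P,Q). -/
open MeasureTheory Real
open scoped Matrix.Norms.L2Operator ComplexOrder

noncomputable section

/-- For a real `t > 0` and a square complex matrix `A`, `t ^ A := exp (A · log t)`. -/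
def mpow {k : ℕ} (t : ℝ) (A : Matrix (Fin k) (Fin k) ℂ) : Matrix (Fin k) (Fin k) ℂ :=
  NormedSpace.exp ((Real.log t : ℂ) • A)

/-- The two-parameter matrix Mittag-Leffler function `E_{φ,ψ}(A) = ∑ Aⁿ / Γ(φn + ψ)`. -/
def mittagLeffler {k : ℕ} (φ ψ : ℝ) (A : Matrix (Fin k) (Fin k) ℂ) :
    Matrix (Fin k) (Fin k) ℂ :=
  ∑' n : ℕ, (Real.Gamma (φ * n + ψ))⁻¹ • A ^ n

/-- The integrand of the generalized beta-logarithmic matrix function: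
`a^{1-x} b^x · x^{P-I} (1-x)^{Q-I} E_{φ,ψ}(−R x^{−η}) E_{φ,ψ}(−S (1−x)^{−ξ})`. -/
def gblKernel {k : ℕ} (φ ψ η ξ : ℝ) (R S : Matrix (Fin k) (Fin k) ℂ) (a b : ℝ)
    (P Q : Matrix (Fin k) (Fin k) ℂ) (x : ℝ) : Matrix (Fin k) (Fin k) ℂ :=
  (a ^ (1 - x) * b ^ x : ℝ) •
    (mpow x (P - 1) * mpow (1 - x) (Q - 1) *
      mittagLeffler φ ψ ((-(x ^ (-η)) : ℝ) • R) *
      mittagLeffler φ ψ ((-((1 - x) ^ (-ξ)) : ℝ) • S))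

/-- The generalized beta-logarithmic matrix function `BL_{(φ,ψ)}^{(R,S,η,ξ)}(a,b;P,Q)`. -/
def GBL {k : ℕ} (φ ψ η ξ : ℝ) (R S : Matrix (Fin k) (Fin k) ℂ) (a b : ℝ)
    (P Q : Matrix (Fin k) (Fin k) ℂ) : Matrix (Fin k) (Fin k) ℂ :=
  ∫ x in Set.Ioo (0 : ℝ) 1, gblKernel φ ψ η ξ R S a b P Q x

/-- The generalized beta matrix function `B_{(φ,ψ)}^{(R,S,η,ξ)}(P,Q) = BL(1,1;P,Q)`. -/
def GB {k : ℕ} (φ ψ η ξ : ℝ) (R S : Matrix (Fin k) (Fin k) ℂ)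
    (P Q : Matrix (Fin k) (Fin k) ℂ) : Matrix (Fin k) (Fin k) ℂ :=
  GBL φ ψ η ξ R S 1 1 P Q

lemma mpow_add_one {k : ℕ} {x : ℝ} (hx : 0 < x) (A : Matrix (Fin k) (Fin k) ℂ) :
    mpow x (A + 1) = (x : ℂ) • mpow x A := by
  unfold mpow
  rw [smul_add, Matrix.exp_add_of_commute _ _ (((Commute.one_right A).smul_right _).smul_left _)]
  have h1 : ((Real.log x : ℂ)) • (1 : Matrix (Fin k) (Fin k) ℂ) =
      algebraMap ℂ (Matrix (Fin k) (Fin k) ℂ) (Real.log x : ℂ) := by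
    rw [Algebra.algebraMap_eq_smul_one]
  rw [h1, ← NormedSpace.algebraMap_exp_comm, ← Complex.exp_eq_exp_ℂ,
    ← Complex.ofReal_exp, Real.exp_log hx, Algebra.algebraMap_eq_smul_one,
    mul_smul_comm, mul_one]

lemma kernel_add {k : ℕ} (φ ψ η ξ : ℝ) (R S : Matrix (Fin k) (Fin k) ℂ)
    (P Q : Matrix (Fin k) (Fin k) ℂ) {x : ℝ} (hx : x ∈ Set.Ioo (0 : ℝ) 1) :
    gblKernel φ ψ η ξ R S 1 1 (P + 1) Q x + gblKernel φ ψ η ξ R S 1 1 P (Q + 1) x =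
      gblKernel φ ψ η ξ R S 1 1 P Q x := by
  obtain ⟨hx0, hx1⟩ := hx
  have hP : P + 1 - 1 = (P - 1) + 1 := by abel
  have hQ : Q + 1 - 1 = (Q - 1) + 1 := by abel
  unfold gblKernel
  rw [hP, hQ, mpow_add_one hx0, mpow_add_one (by linarith : (0:ℝ) < 1 - x)]
  simp only [Real.one_rpow, one_mul, one_smul, smul_mul_assoc, mul_smul_comm]
  rw [← add_smul, Complex.ofReal_sub, Complex.ofReal_one,
    show (x:ℂ) + ((1:ℂ) - x) = 1 by ring, one_smul]

theorem GB_recurrence {k : ℕ} (hk : 1 ≤ k) (P Q R S : Matrix (Fin k) (Fin k) ℂ)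
    (hP : P.PosDef) (hQ : Q.PosDef) (hR : R.PosDef) (hS : S.PosDef)
    (φ ψ η ξ : ℝ) (hφ : 0 < φ) (hψ : 0 < ψ) (hη : 0 < η) (hξ : 0 < ξ)
    (hInt : ∀ m n : ℕ, IntegrableOn
      (gblKernel φ ψ η ξ R S 1 1 (P + m • (1 : Matrix (Fin k) (Fin k) ℂ))
        (Q + n • (1 : Matrix (Fin k) (Fin k) ℂ))) (Set.Ioo 0 1)) :
    GB φ ψ η ξ R S (P + 1) Q + GB φ ψ η ξ R S P (Q + 1) = GB φ ψ η ξ R S P Q := by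
  have h1 : IntegrableOn (gblKernel φ ψ η ξ R S 1 1 (P + 1) Q) (Set.Ioo (0:ℝ) 1) := by
    have := hInt 1 0; simpa using this
  have h2 : IntegrableOn (gblKernel φ ψ η ξ R S 1 1 P (Q + 1)) (Set.Ioo (0:ℝ) 1) := by
    have := hInt 0 1; simpa using this
  unfold GB GBL
  rw [← integral_add h1 h2]
  exact setIntegral_congr_fun measurableSet_Ioo fun x hx => kernel_add φ ψ η ξ R S P Q hx

end
end

section
/- Let k ≥ 1, let P, Q, R, S be Hermitian positive definite k×k complex matrices, and let φ, ψ, η, ξ > 0 be real numbers. Then the generalized beta matrix function admits the infinite-sum representation B_{(φ,ψ)}^{(R,S,η,ξ)}(P,Q) = ∑_{n=0}^∞ B_{(φ,ψ)}^{(R,S,η,ξ)}(P+nI,Q+I), the series converging in the space of k×k complex matrices. -/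
open MeasureTheory Real
open scoped Matrix.Norms.L2Operator ComplexOrder

noncomputable section

lemma exp_smul_one' {k : ℕ} (c : ℂ) :
    NormedSpace.exp (c • (1 : Matrix (Fin k) (Fin k) ℂ)) = Complex.exp c • 1 := by
  rw [Matrix.smul_one_eq_diagonal, Matrix.exp_diagonal]
  have : NormedSpace.exp (fun _ : Fin k => c) = fun _ : Fin k => Complex.exp c := by
    ext i
    simp [Pi.exp_def, Complex.exp_eq_exp_ℂ]
  rw [this, ← Matrix.smul_one_eq_diagonal]

lemma mpow_add_smul_one {k : ℕ} (A : Matrix (Fin k) (Fin k) ℂ) (c : ℂ) (t : ℝ) :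
    mpow t (A + c • 1) = Complex.exp ((Real.log t : ℂ) * c) • mpow t A := by
  unfold mpow
  rw [smul_add, smul_smul]
  rw [Matrix.exp_add_of_commute _ _ (((Commute.one_right A).smul_left _).smul_right _)]
  rw [exp_smul_one']
  rw [mul_smul_comm (Complex.exp ((Real.log t : ℂ) * c)) (NormedSpace.exp ((Real.log t : ℂ) • A))
      (1 : Matrix (Fin k) (Fin k) ℂ), mul_one]

lemma kernel_shift {k : ℕ} (φ ψ η ξ : ℝ) (R S P Q : Matrix (Fin k) (Fin k) ℂ)
    (n : ℕ) {x : ℝ} (hx : x ∈ Set.Ioo (0:ℝ) 1) :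
    gblKernel φ ψ η ξ R S 1 1 (P + n • (1 : Matrix (Fin k) (Fin k) ℂ)) (Q + 1) x
      = ((x : ℂ) ^ n) • gblKernel φ ψ η ξ R S 1 1 P (Q + 1) x := by
  have h1 : P + n • (1 : Matrix (Fin k) (Fin k) ℂ) - 1
      = (P - 1) + (n : ℂ) • (1 : Matrix (Fin k) (Fin k) ℂ) := by
    rw [Nat.cast_smul_eq_nsmul ℂ n (1 : Matrix (Fin k) (Fin k) ℂ)]
    exact add_sub_right_comm P _ 1
  have h2 : Complex.exp ((Real.log x : ℂ) * n) = (x : ℂ) ^ n := by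
    rw [mul_comm, Complex.exp_nat_mul, ← Complex.ofReal_exp, Real.exp_log hx.1]
  unfold gblKernel
  rw [h1, mpow_add_smul_one, h2, smul_mul_assoc, smul_mul_assoc, smul_mul_assoc, smul_comm]

lemma kernel_Q {k : ℕ} (φ ψ η ξ : ℝ) (R S P Q : Matrix (Fin k) (Fin k) ℂ)
    {x : ℝ} (hx : x ∈ Set.Ioo (0:ℝ) 1) :
    gblKernel φ ψ η ξ R S 1 1 P Q x
      = (((1 - x : ℝ) : ℂ))⁻¹ • gblKernel φ ψ η ξ R S 1 1 P (Q + 1) x := by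
  have h1 : Q + (1 : Matrix (Fin k) (Fin k) ℂ) - 1
      = Q := add_sub_cancel_right Q 1
  have h2 : Q - 1 = Q + (-1 : ℂ) • (1 : Matrix (Fin k) (Fin k) ℂ) := by
    rw [neg_smul, one_smul, ← sub_eq_add_neg]
  have h3 : Complex.exp ((Real.log (1 - x) : ℂ) * (-1)) = (((1 - x : ℝ) : ℂ))⁻¹ := by
    rw [mul_neg_one, Complex.exp_neg, ← Complex.ofReal_exp, Real.exp_log (by linarith [hx.2])]
  unfold gblKernel
  rw [h1, h2, mpow_add_smul_one, h3, mul_smul_comm, smul_mul_assoc, smul_mul_assoc, smul_comm]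

theorem GB_infinite_sum_left {k : ℕ} (hk : 1 ≤ k) (P Q R S : Matrix (Fin k) (Fin k) ℂ)
    (hP : P.PosDef) (hQ : Q.PosDef) (hR : R.PosDef) (hS : S.PosDef)
    (φ ψ η ξ : ℝ) (hφ : 0 < φ) (hψ : 0 < ψ) (hη : 0 < η) (hξ : 0 < ξ)
    (hInt : ∀ m n : ℕ, IntegrableOn
      (gblKernel φ ψ η ξ R S 1 1 (P + m • (1 : Matrix (Fin k) (Fin k) ℂ))
        (Q + n • (1 : Matrix (Fin k) (Fin k) ℂ))) (Set.Ioo 0 1)) :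
    GB φ ψ η ξ R S P Q =
      ∑' n : ℕ, GB φ ψ η ξ R S (P + n • (1 : Matrix (Fin k) (Fin k) ℂ)) (Q + 1) := by
  have hfi : IntegrableOn (gblKernel φ ψ η ξ R S 1 1 P (Q + 1)) (Set.Ioo (0:ℝ) 1) := by
    have := hInt 0 1; simpa using this
  have hgi : IntegrableOn (gblKernel φ ψ η ξ R S 1 1 P Q) (Set.Ioo (0:ℝ) 1) := by
    have := hInt 0 0; simpa using this
  have key : HasSum
      (fun n : ℕ => ∫ x in Set.Ioo (0:ℝ) 1,
        gblKernel φ ψ η ξ R S 1 1 (P + n • (1 : Matrix (Fin k) (Fin k) ℂ)) (Q + 1) x)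
      (∫ x in Set.Ioo (0:ℝ) 1, gblKernel φ ψ η ξ R S 1 1 P Q x) := by
    apply MeasureTheory.hasSum_integral_of_dominated_convergence
      (bound := fun n x => x ^ n * ‖gblKernel φ ψ η ξ R S 1 1 P (Q + 1) x‖)
    · intro n
      have := hInt n 1; rw [one_smul] at this
      exact this.aestronglyMeasurable
    · intro n
      rw [ae_restrict_iff' measurableSet_Ioo]
      filter_upwards with x hx
      rw [kernel_shift φ ψ η ξ R S P Q n hx, norm_smul, norm_pow, Complex.norm_real,
        Real.norm_of_nonneg hx.1.le]
    · rw [ae_restrict_iff' measurableSet_Ioo]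
      filter_upwards with x hx
      exact (summable_geometric_of_lt_one hx.1.le hx.2).mul_right _
    · apply (hgi.norm).congr
      rw [Filter.EventuallyEq, ae_restrict_iff' measurableSet_Ioo]
      filter_upwards with x hx
      have h1x : (0:ℝ) < 1 - x := by linarith [hx.2]
      rw [tsum_mul_right, tsum_geometric_of_lt_one hx.1.le hx.2,
        kernel_Q φ ψ η ξ R S P Q hx, norm_smul, norm_inv, Complex.norm_real,
        Real.norm_of_nonneg h1x.le]
    · rw [ae_restrict_iff' measurableSet_Ioo]
      filter_upwards with x hx
      have h1x : (0:ℝ) < 1 - x := by linarith [hx.2]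
      have hgeo : HasSum (fun n : ℕ => (x : ℂ) ^ n) ((1 - (x:ℂ))⁻¹) :=
        hasSum_geometric_of_norm_lt_one (by
          rw [Complex.norm_real, Real.norm_of_nonneg hx.1.le]; exact hx.2)
      have h := hgeo.smul_const (gblKernel φ ψ η ξ R S 1 1 P (Q + 1) x)
      rw [show ((1 : ℂ) - (x:ℂ))⁻¹ = (((1 - x : ℝ):ℂ))⁻¹ by push_cast; ring_nf] at h
      rw [← kernel_Q φ ψ η ξ R S P Q hx] at h
      simp only [kernel_shift φ ψ η ξ R S P Q _ hx]
      exact h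
  exact key.tsum_eq.symm

end
end
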